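/- Self-normalized importance sampling produces properly weighted samples: if x̃¹,…,x̃ᴹ are i.i.d. draws from a proposal density p with p > 0 wherever γ > 0, weights w^i = γ(x̃^i)/p(x̃^i), τ = (1/M)∑ᵢw^i, and x is chosen among x̃¹,…,x̃ᴹ with probability proportional to w^i, then the pair (x, τ) is properly weighted for γ with constant C = 1, i.e., E[h(x)·τ] = Z·∫h(x)π(x)dx for all bounded measurable h, where Z = ∫γ and π = γ/Z. -/

import Mathlib

open MeasureTheory

lemma pi_map_eval_aux {X : Type*} [MeasurableSpace X] {M : ℕ}
    (ν : Measure X) [IsProbabilityMeasure ν] (j : Fin M) :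
    Measure.map (Function.eval j) (Measure.pi fun _ : Fin M => ν) = ν := by
  ext s hs
  rw [Measure.map_apply (measurable_pi_apply j) hs, Set.eval_preimage,
    Measure.pi_pi]
  rw [Finset.prod_eq_single j]
  · simp
  · intro i _ hij; simp [Function.update_of_ne hij]
  · simp

/-- Self-normalized importance sampling produces properly weighted samples:
with i.i.d. draws x̃¹,…,x̃ᴹ from p, weights wⁱ = γ(x̃ⁱ)/p(x̃ⁱ), τ = M⁻¹∑wⁱ, and x drawn
among the x̃ⁱ with probability ∝ wⁱ, the pair (x, τ) is properly weighted for γ with C = 1: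
E[h(x)·τ] = Z·∫h·π for all bounded measurable h. -/
theorem importance_sampling_properly_weighted
    {X : Type*} [MeasurableSpace X] (μ : Measure X)
    (M : ℕ) (hM : 0 < M)
    (γ p : X → ℝ) (hγm : Measurable γ) (hpm : Measurable p)
    (hγnn : ∀ y, 0 ≤ γ y) (hpnn : ∀ y, 0 ≤ p y)
    (hsupp : ∀ y, 0 < γ y → 0 < p y)
    (hpdens : ∫ y, p y ∂μ = 1)
    (hγint : Integrable γ μ)
    (Z : ℝ) (hZ : Z = ∫ y, γ y ∂μ) (hZpos : 0 < Z)
    (P : Measure (Fin M → X))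
    (hP : P = Measure.pi fun _ => μ.withDensity fun y => ENNReal.ofReal (p y))
    (h : X → ℝ) (hmeas : Measurable h) (hbd : ∃ B, ∀ y, |h y| ≤ B) :
    ∫ xs, (∑ j, ((γ (xs j) / p (xs j)) / (∑ l, γ (xs l) / p (xs l))) * h (xs j))
        * ((M : ℝ)⁻¹ * ∑ i, γ (xs i) / p (xs i)) ∂P
      = Z * ∫ y, h y * (γ y / Z) ∂μ := by
  obtain ⟨B, hB⟩ := hbd
  set ν : Measure X := μ.withDensity fun y => ENNReal.ofReal (p y) with hν
  -- p is integrable since its integral is nonzero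
  have hpInt : Integrable p μ := by
    by_contra hc
    rw [integral_undef hc] at hpdens
    norm_num at hpdens
  have hprob : IsProbabilityMeasure ν := by
    constructor
    rw [hν, withDensity_apply _ MeasurableSet.univ, Measure.restrict_univ,
      ← ofReal_integral_eq_lintegral_ofReal hpInt (Filter.Eventually.of_forall hpnn),
      hpdens]
    simp
  -- key pointwise fact: (γ/p) * p = γ
  have hwp : ∀ y, γ y / p y * p y = γ y := by
    intro y
    rcases eq_or_lt_of_le (hpnn y) with h0 | hp
    · have hγ0 : γ y = 0 := by
        by_contra hne
        have := hsupp y (lt_of_le_of_ne (hγnn y) (Ne.symm hne))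
        rw [← h0] at this; exact lt_irrefl _ this
      rw [← h0, hγ0]; simp
    · field_simp
  set F : X → ℝ := fun y => γ y / p y * h y with hFdef
  have hFm : Measurable F := (hγm.div hpm).mul hmeas
  -- Integrable (γ * h) μ
  have hγh : Integrable (fun y => γ y * h y) μ := by
    have := hγint.bdd_mul hmeas.aestronglyMeasurable (Filter.Eventually.of_forall fun y => by
      rw [Real.norm_eq_abs]; exact hB y)
    exact this.congr (Filter.Eventually.of_forall fun y => mul_comm _ _)
  -- F integrable w.r.t. ν
  have hFν : Integrable F ν := by
    rw [hν, integrable_withDensity_iff (hpm.ennreal_ofReal)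
      (Filter.Eventually.of_forall fun y => ENNReal.ofReal_lt_top)]
    refine hγh.congr (Filter.Eventually.of_forall fun y => ?_)
    dsimp only
    rw [ENNReal.toReal_ofReal (hpnn y)]
    show γ y * h y = γ y / p y * h y * p y
    rw [mul_right_comm, hwp]
  -- ∫ F dν = ∫ γ h dμ
  have hFint : ∫ y, F y ∂ν = ∫ y, γ y * h y ∂μ := by
    have hcoe : (fun y => ENNReal.ofReal (p y)) =
        fun y => ((p y).toNNReal : ENNReal) := rfl
    rw [hν, hcoe, integral_withDensity_eq_integral_smul
      (f := fun y => (p y).toNNReal) (measurable_real_toNNReal.comp hpm) F]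
    refine integral_congr_ae (Filter.Eventually.of_forall fun y => ?_)
    show (p y).toNNReal • F y = γ y * h y
    rw [NNReal.smul_def, smul_eq_mul, Real.coe_toNNReal _ (hpnn y)]
    show p y * (γ y / p y * h y) = γ y * h y
    rw [← mul_assoc, mul_comm (p y) (γ y / p y), hwp]
  -- marginals
  have hmap : ∀ j : Fin M, Measure.map (Function.eval j) P = ν := by
    intro j; rw [hP]; exact pi_map_eval_aux ν j
  have hFP : ∀ j : Fin M, Integrable (fun xs : Fin M → X => F (xs j)) P := by
    intro j
    have := (integrable_map_measure (hmap j ▸ hFν.aestronglyMeasurable : _)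
      (measurable_pi_apply j).aemeasurable).mp (by rw [hmap j]; exact hFν)
    exact this
  have hFPint : ∀ j : Fin M, ∫ xs, F (xs j) ∂P = ∫ y, γ y * h y ∂μ := by
    intro j
    rw [← hFint, ← hmap j, integral_map (measurable_pi_apply j).aemeasurable
      ((hmap j) ▸ hFν.aestronglyMeasurable : _)]
  -- pointwise simplification of integrand
  have hpoint : ∀ xs : Fin M → X,
      (∑ j, ((γ (xs j) / p (xs j)) / (∑ l, γ (xs l) / p (xs l))) * h (xs j))
        * ((M : ℝ)⁻¹ * ∑ i, γ (xs i) / p (xs i))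
      = (M : ℝ)⁻¹ * ∑ j, F (xs j) := by
    intro xs
    set s := ∑ l, γ (xs l) / p (xs l) with hs
    by_cases hs0 : s = 0
    · have hall : ∀ l ∈ Finset.univ, γ (xs l) / p (xs l) = 0 :=
        (Finset.sum_eq_zero_iff_of_nonneg
          (fun l _ => div_nonneg (hγnn _) (hpnn _))).mp hs0
      have hz : ∑ j : Fin M, F (xs j) = 0 :=
        Finset.sum_eq_zero fun j _ => by
          show γ (xs j) / p (xs j) * h (xs j) = 0
          rw [hall j (Finset.mem_univ j), zero_mul]
      rw [hs0, mul_zero, mul_zero, hz, mul_zero]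
    · have hsum : ∑ j, ((γ (xs j) / p (xs j)) / s) * h (xs j)
          = (∑ j, F (xs j)) / s := by
        rw [Finset.sum_div]
        refine Finset.sum_congr rfl fun j _ => ?_
        show _ = γ (xs j) / p (xs j) * h (xs j) / s
        rw [div_mul_eq_mul_div]
      rw [hsum]
      field_simp
    -- end
  rw [integral_congr_ae (Filter.Eventually.of_forall hpoint),
    integral_const_mul, integral_finset_sum Finset.univ fun j _ => hFP j]
  have : ∑ j : Fin M, ∫ xs, F (xs j) ∂P = (M : ℝ) * ∫ y, γ y * h y ∂μ := by
    rw [Finset.sum_congr rfl fun j _ => hFPint j]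
    simp [Finset.card_univ, mul_comm]
  rw [this, ← mul_assoc, inv_mul_cancel₀ (by exact_mod_cast hM.ne'), one_mul]
  -- RHS
  have hrhs : ∫ y, h y * (γ y / Z) ∂μ = (∫ y, h y * γ y ∂μ) / Z := by
    rw [← integral_div]
    exact integral_congr_ae (Filter.Eventually.of_forall fun y => by ring)
  rw [hrhs, mul_div_cancel₀ _ hZpos.ne']
  exact integral_congr_ae (Filter.Eventually.of_forall fun y => mul_comm _ _)
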